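/- arXiv:1210.6780 — 2 statements merged into one kernel-verified Lean document; each statement's English description precedes it below -/
import Mathlib

section
/- Let M be the nk×nk block matrix with n×n blocks of size k×k, where the diagonal blocks equal U+L, the blocks strictly above the diagonal equal U, and the blocks strictly below the diagonal equal U+I (with U, L, I the k×k strictly upper all-ones, strictly lower all-ones, and identity matrices respectively). If u and v are valid bid vectors—i.e., each of their n blocks of length k is a canonical basis vector of ℚ^k—and M·u = M·v, then u = v. (Injectivity of the auction outcome map on valid bid vectors.) -/
def Umat (k : ℕ) : Matrix (Fin k) (Fin k) ℚ := fun i j => if i < j then 1 else 0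
def Lmat (k : ℕ) : Matrix (Fin k) (Fin k) ℚ := fun i j => if j < i then 1 else 0

/-- The auction outcome block matrix: block (r,s) is U+L if r=s, U if r<s, U+I if r>s. -/
def Mmat (n k : ℕ) : Matrix (Fin n × Fin k) (Fin n × Fin k) ℚ := fun p q =>
  if p.1 = q.1 then (Umat k + Lmat k) p.2 q.2
  else if p.1 < q.1 then Umat k p.2 q.2
  else (Umat k + 1) p.2 q.2

/-- A valid bid vector: each of the n blocks of length k is a canonical basis vector. -/
def ValidBid (n k : ℕ) (b : Fin n × Fin k → ℚ) : Prop :=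
  ∀ r : Fin n, ∃ i : Fin k, ∀ t : Fin k, b (r, t) = (Pi.single i 1 : Fin k → ℚ) t

lemma sum_lt_ind (k : ℕ) (c : Fin k) :
    ∑ t : Fin k, (if t < c then (1:ℚ) else 0) = (c : ℕ) := by
  rw [Finset.sum_boole]
  norm_num [Finset.filter_gt_eq_Iio, Fin.card_Iio]

lemma sum_le_ind (k : ℕ) (c : Fin k) :
    ∑ t : Fin k, (if t ≤ c then (1:ℚ) else 0) = (c : ℕ) + 1 := by
  rw [Finset.sum_boole]
  norm_num [Finset.filter_ge_eq_Iic, Fin.card_Iic]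

lemma sum_ne_ind (k : ℕ) (c : Fin k) :
    ∑ t : Fin k, (if t < c then (1:ℚ) else 0) + ∑ t : Fin k, (if c < t then (1:ℚ) else 0)
      = (k : ℚ) - 1 := by
  have : ∑ t : Fin k, ((if t < c then (1:ℚ) else 0) + (if c < t then (1:ℚ) else 0))
      = ∑ t : Fin k, (if t = c then (0:ℚ) else 1) := by
    apply Finset.sum_congr rfl
    intro t _
    rcases lt_trichotomy t c with h | h | h
    · simp [h, asymm h, ne_of_lt h]
    · subst h; simp
    · simp [h, asymm h, ne_of_gt h]
  rw [← Finset.sum_add_distrib, this]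
  have : ∀ t : Fin k, (if t = c then (0:ℚ) else 1) = 1 - (if t = c then (1:ℚ) else 0) := by
    intro t; split <;> norm_num
  simp only [this]
  rw [Finset.sum_sub_distrib, Finset.sum_const, Finset.sum_ite_eq' Finset.univ c]
  simp

lemma mulVec_valid (n k : ℕ) (i : Fin n → Fin k) (w : Fin n × Fin k → ℚ)
    (hw : ∀ p : Fin n × Fin k, w p = (Pi.single (i p.1) 1 : Fin k → ℚ) p.2)
    (r : Fin n) (t : Fin k) :
    (Mmat n k).mulVec w (r, t) = ∑ s : Fin n, Mmat n k (r, t) (s, i s) := by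
  unfold Matrix.mulVec dotProduct
  rw [Fintype.sum_prod_type]
  apply Finset.sum_congr rfl
  intro s _
  simp only [hw, Pi.single_apply, mul_ite, mul_one, mul_zero]
  simp

lemma rowsum (n k : ℕ) (i : Fin n → Fin k) (r : Fin n) :
    ∑ t : Fin k, ∑ s : Fin n, Mmat n k (r, t) (s, i s)
      = ((k : ℚ) - 1) + ((r : ℕ) : ℚ) + ∑ s ∈ Finset.univ.erase r, ((i s : ℕ) : ℚ) := by
  rw [Finset.sum_comm]
  have hg : ∀ s : Fin n, ∑ t : Fin k, Mmat n k (r, t) (s, i s)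
      = (if r = s then (k : ℚ) - 1 else ((i s : ℕ) : ℚ)) + (if s < r then (1:ℚ) else 0) := by
    intro s
    rcases lt_trichotomy r s with hrs | hrs | hrs
    · simp only [Mmat, Umat, hrs, hrs.ne, if_false, if_true, if_neg (asymm hrs)]
      rw [sum_lt_ind]
      simp [hrs.ne, asymm hrs]
    · subst hrs
      simp only [Mmat, Umat, Lmat, if_pos rfl, Matrix.add_apply, eq_self_iff_true, if_true]
      rw [Finset.sum_add_distrib, sum_ne_ind]
      simp
    · simp only [Mmat, Umat, hrs.ne', if_false, if_neg (asymm hrs), Matrix.add_apply,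
        Matrix.one_apply]
      rw [Finset.sum_add_distrib, sum_lt_ind, Finset.sum_ite_eq' Finset.univ (i s)]
      simp [hrs.ne', asymm hrs, hrs]
  simp only [hg]
  have hA : (∑ s : Fin n, if r = s then (k:ℚ)-1 else ((i s : ℕ) : ℚ))
      = ((k:ℚ)-1) + ∑ s ∈ Finset.univ.erase r, ((i s : ℕ) : ℚ) := by
    rw [← Finset.add_sum_erase Finset.univ _ (Finset.mem_univ r), if_pos rfl]
    congr 1
    exact Finset.sum_congr rfl fun s hs => if_neg (Ne.symm (Finset.mem_erase.mp hs).1)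
  rw [Finset.sum_add_distrib, sum_lt_ind, hA]
  ring

theorem outcome_map_injective (n k : ℕ) (hn : 0 < n) (hk : 0 < k)
    (u v : Fin n × Fin k → ℚ)
    (hu : ValidBid n k u) (hv : ValidBid n k v)
    (h : (Mmat n k).mulVec u = (Mmat n k).mulVec v) : u = v := by
  choose i hi using hu
  choose j hj using hv
  have hwu : ∀ p : Fin n × Fin k, u p = (Pi.single (i p.1) 1 : Fin k → ℚ) p.2 :=
    fun p => hi p.1 p.2
  have hwv : ∀ p : Fin n × Fin k, v p = (Pi.single (j p.1) 1 : Fin k → ℚ) p.2 :=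
    fun p => hj p.1 p.2
  suffices hij : i = j by
    funext p
    rw [hwu p, hwv p, hij]
  by_cases hn1 : n = 1
  · subst hn1
    funext r
    have hr0 : r = 0 := Subsingleton.elim r 0
    subst hr0
    have h2 := congrFun h (0, i 0)
    rw [mulVec_valid 1 k i u hwu, mulVec_valid 1 k j v hwv,
      Fin.sum_univ_one, Fin.sum_univ_one] at h2
    by_contra hne
    rcases lt_or_gt_of_ne hne with hlt | hgt
    · simp [Mmat, Umat, Lmat, hlt, asymm hlt] at h2
    · simp [Mmat, Umat, Lmat, hgt, asymm hgt] at h2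
  · have hn2 : 2 ≤ n := by omega
    have hE : ∀ r : Fin n, ∑ s ∈ Finset.univ.erase r, ((i s : ℕ) : ℚ)
        = ∑ s ∈ Finset.univ.erase r, ((j s : ℕ) : ℚ) := by
      intro r
      have h1 : ∑ t : Fin k, (Mmat n k).mulVec u (r, t)
          = ∑ t : Fin k, (Mmat n k).mulVec v (r, t) := by rw [h]
      simp only [mulVec_valid n k i u hwu, mulVec_valid n k j v hwv] at h1
      rw [rowsum, rowsum] at h1
      linarith
    have hEr : ∀ r : Fin n, (∑ s : Fin n, ((i s : ℕ) : ℚ)) - ((i r : ℕ) : ℚ)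
        = (∑ s : Fin n, ((j s : ℕ) : ℚ)) - ((j r : ℕ) : ℚ) := by
      intro r
      have := hE r
      rwa [Finset.sum_erase_eq_sub (Finset.mem_univ r),
        Finset.sum_erase_eq_sub (Finset.mem_univ r)] at this
    have hT : (∑ s : Fin n, ((i s : ℕ) : ℚ)) = ∑ s : Fin n, ((j s : ℕ) : ℚ) := by
      have hsum := Finset.sum_congr rfl (fun r (_ : r ∈ Finset.univ) => hEr r)
      simp only [Finset.sum_sub_distrib, Finset.sum_const, Finset.card_univ,
        Fintype.card_fin, nsmul_eq_mul] at hsum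
      have hge : (2:ℚ) ≤ (n:ℚ) := by exact_mod_cast hn2
      nlinarith [hsum]
    funext r
    have := hEr r
    rw [hT] at this
    have hq : ((i r : ℕ) : ℚ) = ((j r : ℕ) : ℚ) := by linarith
    exact Fin.ext (Nat.cast_inj.mp hq)
end

section
/- In the EQDL man-in-the-middle attack: let G be a finite cyclic group of prime order q with generators g₁ and g₂. Suppose for indices o in a finite set S, party o holds secret m_o and publishes λ_o = g₁^{z_o}, μ_o = g₂^{z_o}, and to challenge c responds r_o = z_o + c·m_o. Let v = g₁^{1 − Σ_o m_o} and w = g₂^{1 − Σ_o m_o}. Then λ = Π_o λ_o^{−1}, μ = Π_o μ_o^{−1}, and r = c − Σ_o r_o satisfy the verification equations g₁^r = λ·v^c and g₂^r = μ·w^c. -/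
theorem mitm_eqdl_verifies (G : Type*) [CommGroup G] [Fintype G] (q : ℕ) (hq : q.Prime)
    (hcard : Fintype.card G = q) (g₁ g₂ : G)
    (ι : Type*) (S : Finset ι) (z m : ι → ZMod q) (c : ZMod q)
    (lam mu : ι → G)
    (hlam : ∀ o, lam o = g₁ ^ (z o).val) (hmu : ∀ o, mu o = g₂ ^ (z o).val)
    (resp : ι → ZMod q) (hresp : ∀ o, resp o = z o + c * m o)
    (v w : G)
    (hv : v = g₁ ^ (1 - ∑ o ∈ S, m o).val) (hw : w = g₂ ^ (1 - ∑ o ∈ S, m o).val)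
    (lamM muM : G)
    (hlamM : lamM = ∏ o ∈ S, (lam o)⁻¹) (hmuM : muM = ∏ o ∈ S, (mu o)⁻¹)
    (r : ZMod q) (hr : r = c - ∑ o ∈ S, resp o) :
    g₁ ^ r.val = lamM * v ^ c.val ∧ g₂ ^ r.val = muM * w ^ c.val := by
  haveI : NeZero q := ⟨hq.pos.ne'⟩
  have hq1 : ∀ (g : G) (n : ℕ), g ^ ((n : ZMod q)).val = g ^ n := by
    intro g n
    have h1 : g ^ q = 1 := by rw [← hcard]; exact pow_card_eq_one
    rw [ZMod.val_natCast]
    exact (pow_eq_pow_mod n h1).symm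
  have hadd : ∀ (g : G) (a b : ZMod q), g ^ (a + b).val = g ^ a.val * g ^ b.val := by
    intro g a b
    have h2 : ((a.val + b.val : ℕ) : ZMod q) = a + b := by
      push_cast [ZMod.natCast_val, ZMod.cast_id]
      ring
    rw [← h2, hq1, pow_add]
  have hmul : ∀ (g : G) (a b : ZMod q), g ^ (a * b).val = (g ^ a.val) ^ b.val := by
    intro g a b
    have h2 : ((a.val * b.val : ℕ) : ZMod q) = a * b := by
      push_cast [ZMod.natCast_val, ZMod.cast_id]
      ring
    rw [← h2, hq1, pow_mul]
  have hsum : ∀ (g : G) (f : ι → ZMod q),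
      g ^ (∑ o ∈ S, f o).val = ∏ o ∈ S, g ^ (f o).val := by
    intro g f
    clear hv hw hlamM hmuM hr
    induction S using Finset.cons_induction_on with
    | empty => simp
    | cons _ _ h ih => rw [Finset.sum_cons, Finset.prod_cons, hadd, ih]
  have hz : r + ∑ o ∈ S, z o = (1 - ∑ o ∈ S, m o) * c := by
    rw [hr]
    simp only [hresp, Finset.sum_add_distrib, ← Finset.mul_sum]
    ring
  have key : ∀ g : G, g ^ r.val = (∏ o ∈ S, (g ^ (z o).val)⁻¹) *
      (g ^ (1 - ∑ o ∈ S, m o).val) ^ c.val := by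
    intro g
    rw [← hmul, Finset.prod_inv_distrib, ← hsum, eq_inv_mul_iff_mul_eq,
      mul_comm, ← hadd, hz]
  constructor
  · rw [hlamM, hv]
    simp only [hlam]
    exact key g₁
  · rw [hmuM, hw]
    simp only [hmu]
    exact key g₂
end
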